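/- For the uniformly accelerated observer γ(s) = (c²/a)·exp((as/c²)σ)·σ, the conformal factor of its Märzke-Wheeler map at the point s + xσ is |DΩ_γ|_L(s + xσ) = exp(ax/c²), i.e., |∂₀Ω_γ(s + xσ)|²_L = exp(2ax/c²). -/

import Mathlib

/-- Split-complex multiplication on ℝ × ℝ: (a + bσ)(c + dσ) = (ac+bd) + (ad+bc)σ. -/
def scMul (z w : ℝ × ℝ) : ℝ × ℝ := (z.1 * w.1 + z.2 * w.2, z.1 * w.2 + z.2 * w.1)

/-- Conjugation (a + bσ)* = a − bσ. -/
def scConj (z : ℝ × ℝ) : ℝ × ℝ := (z.1, -z.2)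

/-- Minkowski quadratic form |a + bσ|²_L = a² − b². -/
def qL (z : ℝ × ℝ) : ℝ := z.1 ^ 2 - z.2 ^ 2

/-- Märzke-Wheeler map of a curve γ : ℝ → M₂, at the point s + xσ (time s, space x):
Ω_γ(s + xσ) = (γ(s+x) + γ(s−x))/2 + ((γ(s+x) − γ(s−x))/2)·σ,
where multiplication by σ swaps the two real coordinates. -/
noncomputable def Omega (γ : ℝ → ℝ × ℝ) (p : ℝ × ℝ) : ℝ × ℝ :=
  ((γ (p.1 + p.2)).1 / 2 + (γ (p.1 - p.2)).1 / 2 + ((γ (p.1 + p.2)).2 / 2 - (γ (p.1 - p.2)).2 / 2),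
   (γ (p.1 + p.2)).2 / 2 + (γ (p.1 - p.2)).2 / 2 + ((γ (p.1 + p.2)).1 / 2 - (γ (p.1 - p.2)).1 / 2))

/-- The uniformly accelerated observer in (time, space) coordinates. -/
noncomputable def accObs (a c : ℝ) (s : ℝ) : ℝ × ℝ :=
  (c ^ 2 / a * Real.sinh (a * s / c ^ 2), c ^ 2 / a * Real.cosh (a * s / c ^ 2))

/-- The conformal factor of the Märzke-Wheeler map of the uniformly accelerated
observer: |∂₀Ω_γ(s + xσ)|²_L = exp(2ax/c²). -/
theorem conformal_factor_accObs (a c : ℝ) (ha : 0 < a) (hc : 0 < c) (s x : ℝ) :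
    qL (deriv (fun s' => Omega (accObs a c) (s', x)) s) = Real.exp (2 * a * x / c ^ 2) := by
  have hc2 : (c : ℝ) ^ 2 ≠ 0 := by positivity
  have ha' : a ≠ 0 := ha.ne'
  set A : ℝ := a * (s + x) / c ^ 2 with hA
  set B : ℝ := a * (s - x) / c ^ 2 with hB
  -- derivative of inner affine maps
  have hlin1 : HasDerivAt (fun s' : ℝ => a * (s' + x) / c ^ 2) (a / c ^ 2) s := by
    have := (((hasDerivAt_id s).add_const x).const_mul a).div_const (c ^ 2)
    simpa using this
  have hlin2 : HasDerivAt (fun s' : ℝ => a * (s' - x) / c ^ 2) (a / c ^ 2) s := by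
    have := (((hasDerivAt_id s).sub_const x).const_mul a).div_const (c ^ 2)
    simpa using this
  have hs1 : HasDerivAt (fun s' : ℝ => Real.sinh (a * (s' + x) / c ^ 2))
      (Real.cosh A * (a / c ^ 2)) s := (Real.hasDerivAt_sinh _).comp s hlin1
  have hs2 : HasDerivAt (fun s' : ℝ => Real.sinh (a * (s' - x) / c ^ 2))
      (Real.cosh B * (a / c ^ 2)) s := (Real.hasDerivAt_sinh _).comp s hlin2
  have hc1 : HasDerivAt (fun s' : ℝ => Real.cosh (a * (s' + x) / c ^ 2))
      (Real.sinh A * (a / c ^ 2)) s := (Real.hasDerivAt_cosh _).comp s hlin1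
  have hc2' : HasDerivAt (fun s' : ℝ => Real.cosh (a * (s' - x) / c ^ 2))
      (Real.sinh B * (a / c ^ 2)) s := (Real.hasDerivAt_cosh _).comp s hlin2
  have hf : (fun s' => Omega (accObs a c) (s', x)) =
      fun s' : ℝ =>
        (c ^ 2 / a * Real.sinh (a * (s' + x) / c ^ 2) / 2
            + c ^ 2 / a * Real.sinh (a * (s' - x) / c ^ 2) / 2
            + (c ^ 2 / a * Real.cosh (a * (s' + x) / c ^ 2) / 2
                - c ^ 2 / a * Real.cosh (a * (s' - x) / c ^ 2) / 2),
         c ^ 2 / a * Real.cosh (a * (s' + x) / c ^ 2) / 2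
            + c ^ 2 / a * Real.cosh (a * (s' - x) / c ^ 2) / 2
            + (c ^ 2 / a * Real.sinh (a * (s' + x) / c ^ 2) / 2
                - c ^ 2 / a * Real.sinh (a * (s' - x) / c ^ 2) / 2)) := by
    funext s'
    simp [Omega, accObs]
  have hD : HasDerivAt (fun s' => Omega (accObs a c) (s', x))
      ((c ^ 2 / a * (Real.cosh A * (a / c ^ 2)) / 2
          + c ^ 2 / a * (Real.cosh B * (a / c ^ 2)) / 2
          + (c ^ 2 / a * (Real.sinh A * (a / c ^ 2)) / 2
              - c ^ 2 / a * (Real.sinh B * (a / c ^ 2)) / 2),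
        c ^ 2 / a * (Real.sinh A * (a / c ^ 2)) / 2
          + c ^ 2 / a * (Real.sinh B * (a / c ^ 2)) / 2
          + (c ^ 2 / a * (Real.cosh A * (a / c ^ 2)) / 2
              - c ^ 2 / a * (Real.cosh B * (a / c ^ 2)) / 2))) s := by
    rw [hf]
    exact ((((hs1.const_mul _).div_const 2).add ((hs2.const_mul _).div_const 2)).add
        (((hc1.const_mul _).div_const 2).sub ((hc2'.const_mul _).div_const 2))).prodMk
      ((((hc1.const_mul _).div_const 2).add ((hc2'.const_mul _).div_const 2)).add
        (((hs1.const_mul _).div_const 2).sub ((hs2.const_mul _).div_const 2)))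
  rw [hD.deriv]
  have hcancel : c ^ 2 / a * (a / c ^ 2) = 1 := by field_simp
  have hexp : Real.exp (2 * a * x / c ^ 2)
      = (Real.cosh A + Real.sinh A) * (Real.cosh B - Real.sinh B) := by
    rw [Real.cosh_add_sinh, Real.cosh_sub_sinh, ← Real.exp_add]
    congr 1
    rw [hA, hB]
    field_simp
    ring
  rw [hexp]
  simp only [qL]
  have h1 : c ^ 2 / a * (Real.cosh A * (a / c ^ 2)) = Real.cosh A := by
    rw [mul_comm (Real.cosh A), ← mul_assoc, hcancel, one_mul]
  have h2 : c ^ 2 / a * (Real.cosh B * (a / c ^ 2)) = Real.cosh B := by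
    rw [mul_comm (Real.cosh B), ← mul_assoc, hcancel, one_mul]
  have h3 : c ^ 2 / a * (Real.sinh A * (a / c ^ 2)) = Real.sinh A := by
    rw [mul_comm (Real.sinh A), ← mul_assoc, hcancel, one_mul]
  have h4 : c ^ 2 / a * (Real.sinh B * (a / c ^ 2)) = Real.sinh B := by
    rw [mul_comm (Real.sinh B), ← mul_assoc, hcancel, one_mul]
  simp only [h1, h2, h3, h4]
  ring
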